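/- arXiv:2103.12034 — 4 statements merged into one kernel-verified Lean document; each statement's English description precedes it below -/
import Mathlib

section
/- Let n ≥ 1 and let λ be the line-graph operator on periodic binary sequences of period n. Then the n-fold iterate λ^n sends every periodic binary sequence of period n to the zero sequence if and only if n is a power of 2 (i.e., there exists k ∈ ℕ with n = 2^k). -/
/-- The line-graph operator on periodic binary sequences of period `n`:
`(lineOp n a) i = a i + a (i + 1)`. -/
def lineOp (n : ℕ) (a : ZMod n → ZMod 2) : ZMod n → ZMod 2 :=
  fun i => a i + a (i + 1)

lemma lineOp_iterate_formula (n : ℕ) (a : ZMod n → ZMod 2) (k : ℕ) (i : ZMod n) :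
    (lineOp n)^[k] a i =
      ∑ j ∈ Finset.range (k + 1), (Nat.choose k j : ZMod 2) * a (i + (j : ZMod n)) := by
  induction k generalizing i with
  | zero => simp
  | succ k ih =>
    rw [Function.iterate_succ_apply', lineOp]
    rw [ih i, ih (i + 1)]
    rw [Finset.sum_range_succ' (f := fun j => (Nat.choose (k+1) j : ZMod 2) * a (i + (j : ZMod n)))]
    have h1 : ∀ j, (Nat.choose (k+1) (j+1) : ZMod 2) = (Nat.choose k j : ZMod 2)
        + (Nat.choose k (j+1) : ZMod 2) := by
      intro j
      rw [Nat.choose_succ_succ', Nat.cast_add]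
    simp only [h1, add_mul]
    rw [Finset.sum_add_distrib]
    have h2 : ∑ j ∈ Finset.range (k + 1), (Nat.choose k (j+1) : ZMod 2) * a (i + ((j+1 : ℕ) : ZMod n))
        + (Nat.choose (k+1) 0 : ZMod 2) * a (i + ((0:ℕ) : ZMod n))
        = ∑ j ∈ Finset.range (k + 2), (Nat.choose k j : ZMod 2) * a (i + (j : ZMod n)) := by
      rw [Finset.sum_range_succ' (f := fun j => (Nat.choose k j : ZMod 2) * a (i + (j : ZMod n)))]
      simp
    have h3 : ∑ j ∈ Finset.range (k + 2), (Nat.choose k j : ZMod 2) * a (i + (j : ZMod n))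
        = ∑ j ∈ Finset.range (k + 1), (Nat.choose k j : ZMod 2) * a (i + (j : ZMod n)) := by
      rw [Finset.sum_range_succ]
      simp [Nat.choose_succ_self]
    have h4 : ∀ j : ℕ, i + 1 + (j : ZMod n) = i + ((j + 1 : ℕ) : ZMod n) := by
      intro j; push_cast; ring
    rw [add_assoc, h2, h3]
    rw [add_comm]
    congr 1
    refine Finset.sum_congr rfl fun j _ => ?_
    rw [h4 j]

lemma pow_two_of_choose_even : ∀ n : ℕ, 1 ≤ n →
    (∀ r : ℕ, 0 < r → r < n → 2 ∣ n.choose r) → ∃ k : ℕ, n = 2 ^ k := by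
  intro n
  induction n using Nat.strong_induction_on with
  | _ n ih =>
    intro hn h
    rcases eq_or_lt_of_le hn with h1 | h1
    · exact ⟨0, h1.symm⟩
    rcases Nat.even_or_odd n with he | ho
    · obtain ⟨m, hm⟩ := he
      have hm2 : n = 2 * m := by omega
      have hm1 : 1 ≤ m := by omega
      have hmlt : m < n := by omega
      obtain ⟨k, hk⟩ := ih m hmlt hm1 (fun s hs0 hsm => by
        have hdvd : 2 ∣ n.choose (2 * s) := h (2 * s) (by omega) (by omega)
        have hl : Nat.choose n (2 * s) ≡
            Nat.choose (n % 2) ((2 * s) % 2) * Nat.choose (n / 2) ((2 * s) / 2) [MOD 2] :=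
          Choose.choose_modEq_choose_mod_mul_choose_div_nat
        have hn2 : n % 2 = 0 := by omega
        have hn3 : n / 2 = m := by omega
        have hs2 : (2 * s) % 2 = 0 := by omega
        have hs3 : (2 * s) / 2 = s := by omega
        rw [hn2, hn3, hs2, hs3, Nat.choose_zero_right, one_mul] at hl
        have : n.choose (2 * s) % 2 = Nat.choose m s % 2 := hl
        omega)
      exact ⟨k + 1, by rw [hm2, hk, pow_succ, mul_comm]⟩
    · exfalso
      have := h 1 one_pos h1
      rw [Nat.choose_one_right] at this
      rcases ho with ⟨m, hm⟩
      omega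

theorem lineOp_iterate_n_eq_zero_iff_pow_two (n : ℕ) (hn : 1 ≤ n) :
    (∀ a : ZMod n → ZMod 2, (lineOp n)^[n] a = 0) ↔ ∃ k : ℕ, n = 2 ^ k := by
  haveI : NeZero n := ⟨by omega⟩
  constructor
  · intro h
    apply pow_two_of_choose_even n hn
    intro r hr0 hrn
    set a : ZMod n → ZMod 2 := fun j => if j = (r : ZMod n) then 1 else 0 with ha
    have h0 := congrFun (h a) 0
    rw [lineOp_iterate_formula] at h0
    have key : ∀ j ∈ Finset.range (n + 1), j ≠ r →
        (Nat.choose n j : ZMod 2) * a ((0 : ZMod n) + (j : ZMod n)) = 0 := by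
      intro j hj hjr
      rw [Finset.mem_range] at hj
      have : ((0 : ZMod n) + (j : ZMod n)) ≠ (r : ZMod n) := by
        rw [zero_add]
        intro hc
        rw [ZMod.natCast_eq_natCast_iff] at hc
        have hcm : j % n = r % n := hc
        rcases lt_or_eq_of_le (Nat.lt_succ_iff.mp hj) with hjn | hjn
        · rw [Nat.mod_eq_of_lt hjn, Nat.mod_eq_of_lt hrn] at hcm; omega
        · rw [hjn, Nat.mod_self, Nat.mod_eq_of_lt hrn] at hcm; omega
      rw [ha]
      simp only [this, if_false, mul_zero]
    rw [Finset.sum_eq_single_of_mem r (Finset.mem_range.mpr (by omega)) key] at h0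
    rw [ha] at h0
    simp only [zero_add, if_pos rfl, mul_one, if_true, Pi.zero_apply] at h0
    exact (ZMod.natCast_eq_zero_iff _ 2).mp h0
  · rintro ⟨k, rfl⟩ a
    funext i
    rw [lineOp_iterate_formula, Pi.zero_apply]
    rw [Finset.sum_range_succ]
    have hlast : ((2 ^ k : ℕ) : ZMod (2 ^ k)) = 0 := ZMod.natCast_self _
    rw [Nat.choose_self, Nat.cast_one, one_mul, hlast, add_zero]
    rw [Finset.sum_eq_single_of_mem 0 (Finset.mem_range.mpr (by positivity))
      (fun j hj hj0 => by
        rw [Finset.mem_range] at hj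
        have : (2 : ℕ) ∣ (2 ^ k).choose j :=
          Nat.Prime.dvd_choose_pow Nat.prime_two hj0 (by omega)
        obtain ⟨c, hc⟩ := this
        rw [hc, Nat.cast_mul, show ((2:ℕ):ZMod 2) = 0 by decide, zero_mul, zero_mul])]
    simp [CharTwo.add_self_eq_zero]
end

section
/- Let n ≥ 1 and let λ be the line-graph operator on periodic binary sequences of period n. Then every periodic binary sequence of period n eventually terminates at the zero sequence (i.e., for every a : ZMod n → ZMod 2 there exists k ∈ ℕ with λ^k a = 0) if and only if n is a power of 2. -/
lemma lineOp_zero (n : ℕ) : lineOp n 0 = 0 := by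
  funext i; simp [lineOp]

lemma lineOp_two_pow (n j : ℕ) (a : ZMod n → ZMod 2) (i : ZMod n) :
    (lineOp n)^[2 ^ j] a i = a i + a (i + (2 ^ j : ℕ)) := by
  induction j generalizing a i with
  | zero => simp [lineOp]
  | succ j ih =>
      have h2 : 2 ^ (j + 1) = 2 ^ j + 2 ^ j := by ring
      rw [h2, Function.iterate_add_apply, ih, ih, ih]
      push_cast
      ring_nf
      simp [CharTwo.two_eq_zero]

theorem lineOp_eventually_zero_iff_pow_two (n : ℕ) (hn : 1 ≤ n) :
    (∀ a : ZMod n → ZMod 2, ∃ k : ℕ, (lineOp n)^[k] a = 0) ↔ ∃ k : ℕ, n = 2 ^ k := by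
  haveI : NeZero n := ⟨by omega⟩
  constructor
  · intro h
    obtain ⟨k, hk⟩ := h (fun i => if i = 0 then 1 else 0)
    have ht : 2 ^ k = (2 ^ k - k) + k := by
      have := (Nat.lt_two_pow_self (n := k)); omega
    have h0 : (lineOp n)^[2 ^ k] (fun i => if i = 0 then 1 else 0) = 0 := by
      rw [ht, Function.iterate_add_apply, hk]
      exact Function.iterate_fixed (lineOp_zero n) _
    have := congrFun h0 0
    rw [lineOp_two_pow] at this
    simp at this
    have h2 : ((2 ^ k : ℕ) : ZMod n) = 0 := by
      push_cast
      by_contra hne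
      rw [if_neg hne, add_zero] at this
      exact one_ne_zero this
    have hd : n ∣ 2 ^ k := (ZMod.natCast_eq_zero_iff _ _).mp h2
    obtain ⟨j, -, hj⟩ := (Nat.dvd_prime_pow Nat.prime_two).mp hd
    exact ⟨j, hj⟩
  · rintro ⟨k, rfl⟩ a
    refine ⟨2 ^ k, funext fun i => ?_⟩
    rw [lineOp_two_pow]
    have : ((2 ^ k : ℕ) : ZMod (2 ^ k)) = 0 := by
      simp
    rw [this, add_zero, CharTwo.add_self_eq_zero]
    rfl
end

section
/- Let n ≥ 1, let λ be the line-graph operator on periodic binary sequences of period n, and let b : ZMod n → ZMod 2. Then there exists a : ZMod n → ZMod 2 with λ a = b if and only if ∑_{i ∈ ZMod n} b i = 0 in ZMod 2. (In spin language: a configuration of interactions arises from a spin configuration, i.e., is unfrustrated, exactly when it contains an even number of 1's.) -/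
lemma sum_zmod_eq_sum_range (n : ℕ) [NeZero n] (b : ZMod n → ZMod 2) :
    ∑ i : ZMod n, b i = ∑ j ∈ Finset.range n, b (j : ZMod n) := by
  rw [Finset.sum_range fun j => b (j : ZMod n)]
  have hbij : Function.Bijective (fun j : Fin n => ((j : ℕ) : ZMod n)) := by
    rw [Fintype.bijective_iff_injective_and_card]
    refine ⟨fun x y hxy => ?_, by simp⟩
    have := congrArg ZMod.val hxy
    simpa [ZMod.val_natCast_of_lt x.isLt, ZMod.val_natCast_of_lt y.isLt, Fin.val_injective.eq_iff]
      using this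
  exact (Fintype.sum_bijective _ hbij _ _ (fun x => rfl)).symm

theorem mem_range_lineOp_iff_sum_eq_zero (n : ℕ) [NeZero n] (b : ZMod n → ZMod 2) :
    (∃ a : ZMod n → ZMod 2, lineOp n a = b) ↔ ∑ i : ZMod n, b i = 0 := by
  constructor
  · rintro ⟨a, rfl⟩
    have : ∑ i : ZMod n, (a i + a (i + 1)) = ∑ i : ZMod n, a i + ∑ i : ZMod n, a (i + 1) :=
      Finset.sum_add_distrib
    have h2 : ∑ i : ZMod n, a (i + 1) = ∑ i : ZMod n, a i :=
      Fintype.sum_equiv (Equiv.addRight 1) _ _ (fun i => rfl)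
    simp only [lineOp, this, h2]
    exact CharTwo.add_self_eq_zero _
  · intro hsum
    refine ⟨fun i => ∑ j ∈ Finset.range i.val, b (j : ZMod n), ?_⟩
    funext i
    show (∑ j ∈ Finset.range i.val, b (j : ZMod n)) +
        (∑ j ∈ Finset.range (i + 1).val, b (j : ZMod n)) = b i
    have hiv : i.val < n := ZMod.val_lt i
    rcases lt_or_eq_of_le (Nat.succ_le_of_lt hiv) with h | h
    · have hval : (i + 1).val = i.val + 1 := by
        have : ((i.val + 1 : ℕ) : ZMod n) = i + 1 := by
          push_cast
          rw [ZMod.natCast_val, ZMod.cast_id]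
        rw [← this, ZMod.val_natCast_of_lt h]
      rw [hval, Finset.sum_range_succ]
      have : ((i.val : ℕ) : ZMod n) = i := by rw [ZMod.natCast_val, ZMod.cast_id]
      rw [this, ← add_assoc, CharTwo.add_self_eq_zero, zero_add]
    · -- i.val + 1 = n, so i + 1 = 0
      have hi1 : (i + 1 : ZMod n) = 0 := by
        have : ((i.val + 1 : ℕ) : ZMod n) = i + 1 := by
          push_cast
          rw [ZMod.natCast_val, ZMod.cast_id]
        have h' : i.val + 1 = n := h
        rw [← this, h', ZMod.natCast_self]
      rw [hi1]
      simp only [ZMod.val_zero, Finset.range_zero, Finset.sum_empty, add_zero]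
      have htot : ∑ j ∈ Finset.range n, b (j : ZMod n) = 0 := by
        rw [← sum_zmod_eq_sum_range]; exact hsum
      have h' : i.val + 1 = n := h
      have hsplit := Finset.sum_range_succ (fun j => b ((j : ℕ) : ZMod n)) i.val
      rw [h'] at hsplit
      rw [hsplit] at htot
      have hcast : ((i.val : ℕ) : ZMod n) = i := by rw [ZMod.natCast_val, ZMod.cast_id]
      rw [hcast] at htot
      -- x + b i = 0 implies x = b i in char 2
      have := congrArg (· + b i) htot
      simpa [add_assoc, CharTwo.add_self_eq_zero] using this
end

section
/- Let n ≥ 1 and suppose n is a power of 2 (n = 2^k for some k ∈ ℕ). If a : ZMod n → ZMod 2 satisfies λ a = fun i => a (i + s) for some s ∈ ZMod n (i.e., the equivalence class of a under rotations is a fixed point of λ), then a = 0. In other words, when the period is a power of 2, the only eigensequence of the line-graph operator is the trivial sequence. -/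
lemma lineOp_shift (n : ℕ) (a : ZMod n → ZMod 2) (c : ZMod n) :
    lineOp n (fun i => a (i + c)) = fun i => (lineOp n a) (i + c) := by
  funext i
  simp only [lineOp]
  rw [add_right_comm]

lemma lineOp_pow_two (n : ℕ) (t : ℕ) (a : ZMod n → ZMod 2) :
    (lineOp n)^[2 ^ t] a = fun i => a i + a (i + (2 ^ t : ℕ)) := by
  induction t generalizing a with
  | zero => funext i; simp [lineOp]
  | succ t ih =>
    have h2 : (2 : ℕ) ^ (t + 1) = 2 ^ t + 2 ^ t := by ring
    rw [h2, Function.iterate_add_apply, ih, ih]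
    funext i
    simp only
    have hc : ((2 ^ t + 2 ^ t : ℕ) : ZMod n) = ((2 ^ t : ℕ) : ZMod n) + ((2 ^ t : ℕ) : ZMod n) := by
      push_cast; ring
    rw [hc, ← add_assoc i, add_assoc (a i), ← add_assoc (a (i + ((2 ^ t : ℕ) : ZMod n))),
      CharTwo.add_self_eq_zero, zero_add]

lemma lineOp_iter_eigen (n : ℕ) (a : ZMod n → ZMod 2) (s : ZMod n)
    (h : lineOp n a = fun i => a (i + s)) (m : ℕ) :
    (lineOp n)^[m] a = fun i => a (i + m • s) := by
  induction m with
  | zero => simp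
  | succ m ih =>
    rw [Function.iterate_succ_apply', ih, lineOp_shift, h]
    funext i
    simp only [succ_nsmul, add_assoc]

theorem eigensequence_trivial_of_pow_two (n : ℕ) (hn : 1 ≤ n) (k : ℕ) (hk : n = 2 ^ k)
    (a : ZMod n → ZMod 2) (s : ZMod n) (h : lineOp n a = fun i => a (i + s)) :
    a = 0 := by
  have h1 : (lineOp n)^[n] a = fun i => a i + a (i + (n : ZMod n)) := by
    subst hk
    exact lineOp_pow_two _ k a
  have h2 : (lineOp n)^[n] a = fun i => a (i + n • s) := lineOp_iter_eigen n a s h n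
  have hn0 : (n : ZMod n) = 0 := ZMod.natCast_self n
  have hns : n • s = 0 := by
    rw [← Nat.cast_smul_eq_nsmul (ZMod n), hn0, zero_smul]
  funext i
  have key := (congrFun h1 i).symm.trans (congrFun h2 i)
  rw [hns, hn0, add_zero] at key
  have h0 : a i + a i = 0 := CharTwo.add_self_eq_zero _
  rw [key] at h0
  simpa using h0
end
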